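/- Let ζ be a primitive 5th root of unity, F = ζ³W + X + ζY + ζ⁴Z, and σ the cyclic substitution (W,X,Y,Z) ↦ (X,Y,Z,W). Then the map (W:X:Y:Z) ↦ (F : Fσ : Fσ² : Fσ³ : −(F + Fσ + Fσ² + Fσ³)) defines an isomorphism from the cubic surface {WX² + XY² + YZ² + Z²Y = 0} ⊂ P³ onto the diagonal Clebsch cubic {Σ_{i=0}^{4} X_i = Σ_{i=0}^{4} X_i³ = 0} ⊂ P⁴. -/
import Mathlib


open Finset

/-- Projective equality of homogeneous coordinate vectors. -/
def ProjEq {n : ℕ} (v w : Fin n → ℂ) : Prop := ∃ c : ℂ, c ≠ 0 ∧ w = c • v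

/-- The cubic form `W²X + X²Y + Y²Z + Z²W` (the equation of the Clebsch cubic
surface in the coordinates of the paper) with
`(W, X, Y, Z) = (v 0, v 1, v 2, v 3)`. -/
def srcCubic (v : Fin 4 → ℂ) : ℂ :=
  v 0 ^ 2 * v 1 + v 1 ^ 2 * v 2 + v 2 ^ 2 * v 3 + v 3 ^ 2 * v 0

/-- The linear form `Fσᵏ`, where `F = ζ³W + X + ζY + ζ⁴Z` and `σ` is the
cyclic substitution `(W,X,Y,Z) ↦ (X,Y,Z,W)` (indices of `Fin 4` are cyclic). -/
def Fσ (ζ : ℂ) (k : Fin 4) (v : Fin 4 → ℂ) : ℂ :=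
  ζ ^ 3 * v k + v (k + 1) + ζ * v (k + 2) + ζ ^ 4 * v (k + 3)

/-- The map `(W:X:Y:Z) ↦ (F : Fσ : Fσ² : Fσ³ : -(F + Fσ + Fσ² + Fσ³))`. -/
def clebschMap (ζ : ℂ) (v : Fin 4 → ℂ) : Fin 5 → ℂ :=
  ![Fσ ζ 0 v, Fσ ζ 1 v, Fσ ζ 2 v, Fσ ζ 3 v,
    -(Fσ ζ 0 v + Fσ ζ 1 v + Fσ ζ 2 v + Fσ ζ 3 v)]

noncomputable def invMap (ζ : ℂ) (w : Fin 5 → ℂ) : Fin 4 → ℂ :=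
  ![((ζ^2-ζ^3)*w 0 + (ζ-ζ^3)*w 1 + (ζ^4-ζ^3)*w 2 + (1-ζ^3)*w 3)/5,
    ((1-ζ^3)*w 0 + (ζ^2-ζ^3)*w 1 + (ζ-ζ^3)*w 2 + (ζ^4-ζ^3)*w 3)/5,
    ((ζ^4-ζ^3)*w 0 + (1-ζ^3)*w 1 + (ζ^2-ζ^3)*w 2 + (ζ-ζ^3)*w 3)/5,
    ((ζ-ζ^3)*w 0 + (ζ^4-ζ^3)*w 1 + (1-ζ^3)*w 2 + (ζ^2-ζ^3)*w 3)/5]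

/-- Let `ζ` be a primitive 5th root of unity, `F = ζ³W + X + ζY + ζ⁴Z` and `σ`
the cyclic substitution `(W,X,Y,Z) ↦ (X,Y,Z,W)`.  Then the map
`(W:X:Y:Z) ↦ (F : Fσ : Fσ² : Fσ³ : -∑ Fσⁱ)` defines an isomorphism from the
cubic surface `{W²X + X²Y + Y²Z + Z²W = 0} ⊂ ℙ³` onto the diagonal Clebsch
cubic `{∑ Xᵢ = ∑ Xᵢ³ = 0} ⊂ ℙ⁴`: it is an injective linear map whose image
is the hyperplane `∑ Xᵢ = 0`, it carries the source cubic exactly onto the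
locus `∑ Xᵢ³ = 0`, and the induced projective map is onto the Clebsch
surface. -/
theorem stmt_18 (ζ : ℂ) (hζ : IsPrimitiveRoot ζ 5) :
    Function.Injective (clebschMap ζ) ∧
    (∀ v : Fin 4 → ℂ, ∑ i, clebschMap ζ v i = 0) ∧
    (∀ v : Fin 4 → ℂ, srcCubic v = 0 ↔ ∑ i, (clebschMap ζ v i) ^ 3 = 0) ∧
    (∀ w : Fin 5 → ℂ, ∑ i, w i = 0 → ∃ v : Fin 4 → ℂ, clebschMap ζ v = w) ∧
    (∀ w : Fin 5 → ℂ, w ≠ 0 → ∑ i, w i = 0 → ∑ i, (w i) ^ 3 = 0 →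
      ∃ v : Fin 4 → ℂ, v ≠ 0 ∧ srcCubic v = 0 ∧ ProjEq (clebschMap ζ v) w) := by
  have h5 : ζ ^ 5 = 1 := hζ.pow_eq_one
  have h1 : ζ ≠ 1 := hζ.ne_one (by norm_num)
  have hz : ζ ≠ 0 := hζ.ne_zero (by norm_num)
  have hrel : ζ^4 + ζ^3 + ζ^2 + ζ + 1 = 0 := by
    have h2 : (ζ - 1) * (ζ^4 + ζ^3 + ζ^2 + ζ + 1) = 0 := by linear_combination h5
    rcases mul_eq_zero.mp h2 with h | h
    · exact absurd (sub_eq_zero.mp h) h1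
    · exact h
  have hF0 : ∀ v : Fin 4 → ℂ, Fσ ζ 0 v = ζ ^ 3 * v 0 + v 1 + ζ * v 2 + ζ ^ 4 * v 3 := fun v => rfl
  have hF1 : ∀ v : Fin 4 → ℂ, Fσ ζ 1 v = ζ ^ 3 * v 1 + v 2 + ζ * v 3 + ζ ^ 4 * v 0 := fun v => rfl
  have hF2 : ∀ v : Fin 4 → ℂ, Fσ ζ 2 v = ζ ^ 3 * v 2 + v 3 + ζ * v 0 + ζ ^ 4 * v 1 := fun v => rfl
  have hF3 : ∀ v : Fin 4 → ℂ, Fσ ζ 3 v = ζ ^ 3 * v 3 + v 0 + ζ * v 1 + ζ ^ 4 * v 2 := fun v => rfl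
  have hC0 : ∀ v : Fin 4 → ℂ, clebschMap ζ v 0 = Fσ ζ 0 v := fun v => rfl
  have hC1 : ∀ v : Fin 4 → ℂ, clebschMap ζ v 1 = Fσ ζ 1 v := fun v => rfl
  have hC2 : ∀ v : Fin 4 → ℂ, clebschMap ζ v 2 = Fσ ζ 2 v := fun v => rfl
  have hC3 : ∀ v : Fin 4 → ℂ, clebschMap ζ v 3 = Fσ ζ 3 v := fun v => rfl
  have hC4 : ∀ v : Fin 4 → ℂ, clebschMap ζ v 4 = -(Fσ ζ 0 v + Fσ ζ 1 v + Fσ ζ 2 v + Fσ ζ 3 v) := fun v => rfl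
  have hI0 : ∀ w : Fin 5 → ℂ, invMap ζ w 0 = ((ζ^2-ζ^3)*w 0 + (ζ-ζ^3)*w 1 + (ζ^4-ζ^3)*w 2 + (1-ζ^3)*w 3)/5 := fun w => rfl
  have hI1 : ∀ w : Fin 5 → ℂ, invMap ζ w 1 = ((1-ζ^3)*w 0 + (ζ^2-ζ^3)*w 1 + (ζ-ζ^3)*w 2 + (ζ^4-ζ^3)*w 3)/5 := fun w => rfl
  have hI2 : ∀ w : Fin 5 → ℂ, invMap ζ w 2 = ((ζ^4-ζ^3)*w 0 + (1-ζ^3)*w 1 + (ζ^2-ζ^3)*w 2 + (ζ-ζ^3)*w 3)/5 := fun w => rfl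
  have hI3 : ∀ w : Fin 5 → ℂ, invMap ζ w 3 = ((ζ-ζ^3)*w 0 + (ζ^4-ζ^3)*w 1 + (1-ζ^3)*w 2 + (ζ^2-ζ^3)*w 3)/5 := fun w => rfl
  have hleft : ∀ v : Fin 4 → ℂ, invMap ζ (clebschMap ζ v) = v := by
    intro v
    funext i
    fin_cases i
    · show invMap ζ (clebschMap ζ v) 0 = v 0
      rw [hI0, hC0, hC1, hC2, hC3, hF0, hF1, hF2, hF3]
      linear_combination (((-4/5) + (4/5) * ζ + (-1/5) * ζ^3) * v 0 + ((1/5) * ζ + (-2/5) * ζ^3 + (1/5) * ζ^4) * v 1 + ((1/5) * ζ + (-1/5) * ζ^2) * v 2 + ((1/5) * ζ^2 + (-1/5) * ζ^3) * v 3) * hrel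
    · show invMap ζ (clebschMap ζ v) 1 = v 1
      rw [hI1, hC0, hC1, hC2, hC3, hF0, hF1, hF2, hF3]
      linear_combination (((1/5) * ζ^2 + (-1/5) * ζ^3) * v 0 + ((-4/5) + (4/5) * ζ + (-1/5) * ζ^3) * v 1 + ((1/5) * ζ + (-2/5) * ζ^3 + (1/5) * ζ^4) * v 2 + ((1/5) * ζ + (-1/5) * ζ^2) * v 3) * hrel
    · show invMap ζ (clebschMap ζ v) 2 = v 2
      rw [hI2, hC0, hC1, hC2, hC3, hF0, hF1, hF2, hF3]
      linear_combination (((1/5) * ζ + (-1/5) * ζ^2) * v 0 + ((1/5) * ζ^2 + (-1/5) * ζ^3) * v 1 + ((-4/5) + (4/5) * ζ + (-1/5) * ζ^3) * v 2 + ((1/5) * ζ + (-2/5) * ζ^3 + (1/5) * ζ^4) * v 3) * hrel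
    · show invMap ζ (clebschMap ζ v) 3 = v 3
      rw [hI3, hC0, hC1, hC2, hC3, hF0, hF1, hF2, hF3]
      linear_combination (((1/5) * ζ + (-2/5) * ζ^3 + (1/5) * ζ^4) * v 0 + ((1/5) * ζ + (-1/5) * ζ^2) * v 1 + ((1/5) * ζ^2 + (-1/5) * ζ^3) * v 2 + ((-4/5) + (4/5) * ζ + (-1/5) * ζ^3) * v 3) * hrel
  have hright : ∀ w : Fin 5 → ℂ, (∑ i, w i = 0) → clebschMap ζ (invMap ζ w) = w := by
    intro w hs
    rw [Fin.sum_univ_five] at hs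
    have e0 : Fσ ζ 0 (invMap ζ w) = w 0 := by
      rw [hF0, hI0, hI1, hI2, hI3]
      linear_combination (((-4/5) + (4/5) * ζ + (-1/5) * ζ^3) * w 0 + ((1/5) * ζ + (-2/5) * ζ^3 + (1/5) * ζ^4) * w 1 + ((1/5) * ζ + (-1/5) * ζ^2) * w 2 + ((1/5) * ζ^2 + (-1/5) * ζ^3) * w 3) * hrel
    have e1 : Fσ ζ 1 (invMap ζ w) = w 1 := by
      rw [hF1, hI0, hI1, hI2, hI3]
      linear_combination (((1/5) * ζ^2 + (-1/5) * ζ^3) * w 0 + ((-4/5) + (4/5) * ζ + (-1/5) * ζ^3) * w 1 + ((1/5) * ζ + (-2/5) * ζ^3 + (1/5) * ζ^4) * w 2 + ((1/5) * ζ + (-1/5) * ζ^2) * w 3) * hrel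
    have e2 : Fσ ζ 2 (invMap ζ w) = w 2 := by
      rw [hF2, hI0, hI1, hI2, hI3]
      linear_combination (((1/5) * ζ + (-1/5) * ζ^2) * w 0 + ((1/5) * ζ^2 + (-1/5) * ζ^3) * w 1 + ((-4/5) + (4/5) * ζ + (-1/5) * ζ^3) * w 2 + ((1/5) * ζ + (-2/5) * ζ^3 + (1/5) * ζ^4) * w 3) * hrel
    have e3 : Fσ ζ 3 (invMap ζ w) = w 3 := by
      rw [hF3, hI0, hI1, hI2, hI3]
      linear_combination (((1/5) * ζ + (-2/5) * ζ^3 + (1/5) * ζ^4) * w 0 + ((1/5) * ζ + (-1/5) * ζ^2) * w 1 + ((1/5) * ζ^2 + (-1/5) * ζ^3) * w 2 + ((-4/5) + (4/5) * ζ + (-1/5) * ζ^3) * w 3) * hrel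
    funext i
    fin_cases i
    · exact e0
    · exact e1
    · exact e2
    · exact e3
    · show clebschMap ζ (invMap ζ w) 4 = w 4
      rw [hC4, e0, e1, e2, e3]
      linear_combination -hs
  have hcube : ∀ v : Fin 4 → ℂ, ∑ i, (clebschMap ζ v i) ^ 3 = 15 * ζ * srcCubic v := by
    intro v
    rw [Fin.sum_univ_five, hC0, hC1, hC2, hC3, hC4, hF0, hF1, hF2, hF3]
    simp only [srcCubic]
    linear_combination (((-3) * ζ + (-6) * ζ^4 + (-3) * ζ^7) * (v 3^3) + ((-3) + (-6) * ζ + (3) * ζ^2 + (-3) * ζ^3 + (-18) * ζ^4 + (-3) * ζ^5 + (3) * ζ^6 + (-6) * ζ^7 + (-3) * ζ^8) * (v 2*v 3^2) + ((-3) + (-18) * ζ + (12) * ζ^2 + (-3) * ζ^3 + (-15) * ζ^4 + (-3) * ζ^5 + (-3) * ζ^6 + (-3) * ζ^7 + (-3) * ζ^8) * (v 2^2*v 3) + ((-3) * ζ + (-6) * ζ^4 + (-3) * ζ^7) * (v 2^3) + ((-3) + (-6) * ζ + (-3) * ζ^3 + (-12) * ζ^4 + (-3) * ζ^5 + (-6)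 * ζ^7 + (-3) * ζ^8) * (v 1*v 3^2) + ((-6) + (-12) * ζ + (-6) * ζ^3 + (-24) * ζ^4 + (-6) * ζ^5 + (-12) * ζ^7 + (-6) * ζ^8) * (v 1*v 2*v 3) + ((-3) + (-6) * ζ + (3) * ζ^2 + (-3) * ζ^3 + (-18) * ζ^4 + (-3) * ζ^5 + (3) * ζ^6 + (-6) * ζ^7 + (-3) * ζ^8) * (v 1*v 2^2) + ((-3) + (-6) * ζ + (-3) * ζ^3 + (-12) * ζ^4 + (-3) * ζ^5 + (-6) * ζ^7 + (-3) * ζ^8) * (v 1^2*v 3) + ((-3) + (-18) * ζ + (12) * ζ^2 + (-3) * ζ^3 + (-15) * ζ^4 + (-3) * ζ^5 + (-3) * ζ^6 + (-3) * ζ^7 + (-3) * ζ^8) * (v 1^2*v 2) + ((-3) * ζ + (-6) * ζ^4 + (-3) * ζ^7) * (v 1^3) + ((-3) + (-18) * ζ + (12) * ζ^2 + (-3) * ζ^3 + (-15) * ζ^4 + (-3) * ζ^5 + (-3) * ζ^6 + (-3) * ζ^7 + (-3) * ζ^8) * (v 0*v 3^2) + ((-6) + (-12) * ζ + (-6) *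 ζ^3 + (-24) * ζ^4 + (-6) * ζ^5 + (-12) * ζ^7 + (-6) * ζ^8) * (v 0*v 2*v 3) + ((-3) + (-6) * ζ + (-3) * ζ^3 + (-12) * ζ^4 + (-3) * ζ^5 + (-6) * ζ^7 + (-3) * ζ^8) * (v 0*v 2^2) + ((-6) + (-12) * ζ + (-6) * ζ^3 + (-24) * ζ^4 + (-6) * ζ^5 + (-12) * ζ^7 + (-6) * ζ^8) * (v 0*v 1*v 3) + ((-6) + (-12) * ζ + (-6) * ζ^3 + (-24) * ζ^4 + (-6) * ζ^5 + (-12) * ζ^7 + (-6) * ζ^8) * (v 0*v 1*v 2) + ((-3) + (-6) * ζ + (3) * ζ^2 + (-3) * ζ^3 + (-18) * ζ^4 + (-3) * ζ^5 + (3) * ζ^6 + (-6) * ζ^7 + (-3) * ζ^8) * (v 0*v 1^2) + ((-3) + (-6) * ζ + (3) * ζ^2 + (-3) * ζ^3 + (-18) * ζ^4 + (-3) * ζ^5 + (3) * ζ^6 + (-6) * ζ^7 + (-3) * ζ^8) * (v 0^2*v 3) + ((-3) + (-6) * ζ + (-3) * ζ^3 + (-12) * ζ^4 + (-3) * ζ^5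 + (-6) * ζ^7 + (-3) * ζ^8) * (v 0^2*v 2) + ((-3) + (-18) * ζ + (12) * ζ^2 + (-3) * ζ^3 + (-15) * ζ^4 + (-3) * ζ^5 + (-3) * ζ^6 + (-3) * ζ^7 + (-3) * ζ^8) * (v 0^2*v 1) + ((-3) * ζ + (-6) * ζ^4 + (-3) * ζ^7) * (v 0^3)) * hrel
  have hsrc0 : ∀ x : ℂ, 15 * ζ * x = 0 → x = 0 := by
    intro x hx
    rcases mul_eq_zero.mp hx with h | h
    · rcases mul_eq_zero.mp h with h' | h'
      · norm_num at h'
      · exact absurd h' hz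
    · exact h
  refine ⟨?_, ?_, ?_, ?_, ?_⟩
  · intro a b h
    calc a = invMap ζ (clebschMap ζ a) := (hleft a).symm
    _ = invMap ζ (clebschMap ζ b) := by rw [h]
    _ = b := hleft b
  · intro v
    rw [Fin.sum_univ_five, hC0, hC1, hC2, hC3, hC4]
    ring
  · intro v
    rw [hcube v]
    constructor
    · intro h; rw [h]; ring
    · intro h; exact hsrc0 _ h
  · intro w hs
    exact ⟨invMap ζ w, hright w hs⟩
  · intro w hw hs hc
    have hcw : clebschMap ζ (invMap ζ w) = w := hright w hs
    refine ⟨invMap ζ w, ?_, ?_, 1, one_ne_zero, ?_⟩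
    · intro h0
      apply hw
      rw [← hcw, h0]
      funext i
      fin_cases i <;> simp [clebschMap, Fσ]
    · apply hsrc0
      rw [← hcube (invMap ζ w), hcw]
      exact hc
    · rw [one_smul, hcw]
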